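/- arXiv:2507.13149 — 3 statements merged into one kernel-verified Lean document; each statement's English description precedes it below -/
import Mathlib

section
/- Let (Ω,𝒢,ℙ) and (Ω',𝒢',ℙ') be probability spaces, ℱ ⊂ 𝒢 and ℱ' ⊂ 𝒢' sub-σ-algebras, and η a Bochner-integrable 𝒴-valued random variable on the product space (Ω×Ω', 𝒢⊗𝒢', ℙ⊗ℙ'). Then ℙ⊗ℙ'-almost surely, E_{ℙ⊗ℙ'}(η | ℱ⊗ℱ') = E(E'(η | 𝒢⊗ℱ') | ℱ⊗𝒢') = E'(E(η | ℱ⊗𝒢') | 𝒢⊗ℱ'), i.e. the conditional expectation with respect to the product σ-algebra ℱ⊗ℱ' can be computed by conditioning in each coordinate successively, in either order. -/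
open MeasureTheory

section Helpers

variable {Ω Ω' 𝒴 : Type*} [NormedAddCommGroup 𝒴] [NormedSpace ℝ 𝒴]

private lemma prodMono {m₁ n₁ : MeasurableSpace Ω} {m₂ n₂ : MeasurableSpace Ω'}
    (h₁ : m₁ ≤ n₁) (h₂ : m₂ ≤ n₂) : m₁.prod m₂ ≤ n₁.prod n₂ :=
  sup_le_sup (MeasurableSpace.comap_mono h₁) (MeasurableSpace.comap_mono h₂)

private lemma measSet_prod {m₁ : MeasurableSpace Ω} {m₂ : MeasurableSpace Ω'}
    {A : Set Ω} {B : Set Ω'} (hA : MeasurableSet[m₁] A) (hB : MeasurableSet[m₂] B) :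
    MeasurableSet[m₁.prod m₂] (A ×ˢ B) := by
  letI := m₁; letI := m₂; exact hA.prod hB

private lemma genFrom_prod' (m₁ : MeasurableSpace Ω) (m₂ : MeasurableSpace Ω') :
    m₁.prod m₂ = MeasurableSpace.generateFrom
      (Set.image2 (· ×ˢ ·) {A : Set Ω | MeasurableSet[m₁] A} {B : Set Ω' | MeasurableSet[m₂] B}) := by
  letI := m₁; letI := m₂; exact generateFrom_prod.symm

private lemma piSys_prod' (m₁ : MeasurableSpace Ω) (m₂ : MeasurableSpace Ω') :
    IsPiSystem
      (Set.image2 (· ×ˢ ·) {A : Set Ω | MeasurableSet[m₁] A} {B : Set Ω' | MeasurableSet[m₂] B}) := by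
  letI := m₁; letI := m₂; exact isPiSystem_prod

private lemma smIntegralLeft (m₂ : MeasurableSpace Ω') [mΩ : MeasurableSpace Ω]
    (μ : Measure Ω) [SFinite μ] {h : Ω × Ω' → 𝒴}
    (hh : StronglyMeasurable[mΩ.prod m₂] h) :
    StronglyMeasurable[m₂] (fun ω' => ∫ ω, h (ω, ω') ∂μ) := by
  letI := m₂; exact hh.integral_prod_left'

private lemma smIntegralRight (m₁ : MeasurableSpace Ω) [mΩ' : MeasurableSpace Ω']
    (μ' : Measure Ω') [SFinite μ'] {h : Ω × Ω' → 𝒴}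
    (hh : StronglyMeasurable[m₁.prod mΩ'] h) :
    StronglyMeasurable[m₁] (fun ω => ∫ ω', h (ω, ω') ∂μ') := by
  letI := m₁; exact hh.integral_prod_right'

/-- π-λ extension of equality of set integrals. -/
private lemma auxExt {α : Type*} {m : MeasurableSpace α} {m0 : MeasurableSpace α}
    (hm : m ≤ m0) {μ : Measure α} [IsFiniteMeasure μ] {S : Set (Set α)}
    (hgen : m = MeasurableSpace.generateFrom S) (hpi : IsPiSystem S)
    {f g : α → 𝒴} (hf : Integrable f μ) (hg : Integrable g μ)
    (h0 : ∫ x, f x ∂μ = ∫ x, g x ∂μ)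
    (hS : ∀ s ∈ S, ∫ x in s, f x ∂μ = ∫ x in s, g x ∂μ) :
    ∀ s, MeasurableSet[m] s → ∫ x in s, f x ∂μ = ∫ x in s, g x ∂μ := by
  intro s hs
  refine @MeasurableSpace.induction_on_inter α
      m (fun t _ => ∫ x in t, f x ∂μ = ∫ x in t, g x ∂μ) S hgen hpi (by simp) hS ?_ ?_ s hs
  · intro t ht hteq
    have ht0 : MeasurableSet[m0] t := hm _ ht
    have e1 : ∫ x in tᶜ, f x ∂μ = (∫ x, f x ∂μ) - ∫ x in t, f x ∂μ :=
      eq_sub_of_add_eq' (integral_add_compl ht0 hf)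
    have e2 : ∫ x in tᶜ, g x ∂μ = (∫ x, g x ∂μ) - ∫ x in t, g x ∂μ :=
      eq_sub_of_add_eq' (integral_add_compl ht0 hg)
    rw [e1, e2, h0, hteq]
  · intro u hdisj humeas hu
    have hu0 : ∀ i, MeasurableSet[m0] (u i) := fun i => hm _ (humeas i)
    rw [integral_iUnion hu0 hdisj hf.integrableOn, integral_iUnion hu0 hdisj hg.integrableOn]
    exact tsum_congr hu

private lemma fubBox1 {mΩ : MeasurableSpace Ω} {mΩ' : MeasurableSpace Ω'} [CompleteSpace 𝒴]
    (μ : Measure Ω) (μ' : Measure Ω') [SFinite μ] [SFinite μ']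
    (h : Ω × Ω' → 𝒴) (A : Set Ω) (B : Set Ω')
    (hint : IntegrableOn h (A ×ˢ B) (μ.prod μ')) :
    ∫ z in A ×ˢ B, h z ∂(μ.prod μ') = ∫ ω' in B, ∫ ω in A, h (ω, ω') ∂μ ∂μ' := by
  rw [← Measure.prod_restrict]
  exact integral_prod_symm h (by rwa [Measure.prod_restrict])

private lemma fubBox2 {mΩ : MeasurableSpace Ω} {mΩ' : MeasurableSpace Ω'} [CompleteSpace 𝒴]
    (μ : Measure Ω) (μ' : Measure Ω') [SFinite μ] [SFinite μ']
    (h : Ω × Ω' → 𝒴) (A : Set Ω) (B : Set Ω')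
    (hint : IntegrableOn h (A ×ˢ B) (μ.prod μ')) :
    ∫ z in A ×ˢ B, h z ∂(μ.prod μ') = ∫ ω in A, ∫ ω' in B, h (ω, ω') ∂μ' ∂μ := by
  rw [← Measure.prod_restrict]
  exact integral_prod h (by rwa [Measure.prod_restrict])

variable [CompleteSpace 𝒴]

private lemma key1 (ℱ : MeasurableSpace Ω) (ℱ' : MeasurableSpace Ω')
    {mΩ : MeasurableSpace Ω} {mΩ' : MeasurableSpace Ω'}
    (hℱ : ℱ ≤ mΩ) (hℱ' : ℱ' ≤ mΩ')
    (μ : Measure Ω) (μ' : Measure Ω') [IsProbabilityMeasure μ] [IsProbabilityMeasure μ']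
    (η : Ω × Ω' → 𝒴) (hη : Integrable η (μ.prod μ')) :
    (μ.prod μ')[η | ℱ.prod ℱ'] =ᵐ[μ.prod μ']
      (μ.prod μ')[((μ.prod μ')[η | mΩ.prod ℱ']) | ℱ.prod mΩ'] := by
  have hmFF' : ℱ.prod ℱ' ≤ mΩ.prod mΩ' := prodMono hℱ hℱ'
  have hmGF' : mΩ.prod ℱ' ≤ mΩ.prod mΩ' := prodMono le_rfl hℱ'
  have hmFG' : ℱ.prod mΩ' ≤ mΩ.prod mΩ' := prodMono hℱ le_rfl
  set f := (μ.prod μ')[η | ℱ.prod ℱ'] with hfdef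
  set g := (μ.prod μ')[η | mΩ.prod ℱ'] with hgdef
  have hfint : Integrable f (μ.prod μ') := integrable_condExp
  have hgint : Integrable g (μ.prod μ') := integrable_condExp
  have hfm : StronglyMeasurable[ℱ.prod ℱ'] f := stronglyMeasurable_condExp
  have hgm : StronglyMeasurable[mΩ.prod ℱ'] g := stronglyMeasurable_condExp
  have hrect : ∀ s ∈ Set.image2 (· ×ˢ ·) {A : Set Ω | MeasurableSet[ℱ] A}
      {B : Set Ω' | MeasurableSet[mΩ'] B},
      ∫ x in s, f x ∂(μ.prod μ') = ∫ x in s, g x ∂(μ.prod μ') := by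
    rintro s ⟨A, hA, B, hB, rfl⟩
    set φ : Ω' → 𝒴 := fun ω' => ∫ ω, f (ω, ω') ∂(μ.restrict A) with hφdef
    set ψ : Ω' → 𝒴 := fun ω' => ∫ ω, g (ω, ω') ∂(μ.restrict A) with hψdef
    have hA0 : MeasurableSet[mΩ] A := hℱ _ hA
    have hfint' : Integrable f ((μ.restrict A).prod μ') := by
      have h1 : Integrable f ((μ.restrict A).prod (μ'.restrict Set.univ)) := by
        rw [Measure.prod_restrict]; exact hfint.integrableOn
      rwa [Measure.restrict_univ] at h1
    have hgint' : Integrable g ((μ.restrict A).prod μ') := by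
      have h1 : Integrable g ((μ.restrict A).prod (μ'.restrict Set.univ)) := by
        rw [Measure.prod_restrict]; exact hgint.integrableOn
      rwa [Measure.restrict_univ] at h1
    have hφint : Integrable φ μ' := by rw [hφdef]; exact hfint'.integral_prod_right
    have hψint : Integrable ψ μ' := by rw [hψdef]; exact hgint'.integral_prod_right
    have hφm : StronglyMeasurable[ℱ'] φ := by
      rw [hφdef]; exact smIntegralLeft ℱ' (μ.restrict A) (hfm.mono (prodMono hℱ le_rfl))
    have hψm : StronglyMeasurable[ℱ'] ψ := by
      rw [hψdef]; exact smIntegralLeft ℱ' (μ.restrict A) hgm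
    have hφψ : φ =ᵐ[μ'] ψ := by
      refine ae_eq_of_forall_setIntegral_eq_of_sigmaFinite' hℱ'
        (fun s _ _ => hφint.integrableOn) (fun s _ _ => hψint.integrableOn) ?_
        ⟨φ, hφm, Filter.EventuallyEq.rfl⟩ ⟨ψ, hψm, Filter.EventuallyEq.rfl⟩
      intro B' hB' _
      have e1 : ∫ z in A ×ˢ B', f z ∂(μ.prod μ') = ∫ ω' in B', φ ω' ∂μ' := by
        rw [hφdef]; exact fubBox1 μ μ' f A B' hfint.integrableOn
      have e2 : ∫ z in A ×ˢ B', g z ∂(μ.prod μ') = ∫ ω' in B', ψ ω' ∂μ' := by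
        rw [hψdef]; exact fubBox1 μ μ' g A B' hgint.integrableOn
      have e3 : ∫ z in A ×ˢ B', f z ∂(μ.prod μ') = ∫ z in A ×ˢ B', η z ∂(μ.prod μ') :=
        setIntegral_condExp hmFF' hη (measSet_prod hA hB')
      have e4 : ∫ z in A ×ˢ B', g z ∂(μ.prod μ') = ∫ z in A ×ˢ B', η z ∂(μ.prod μ') :=
        setIntegral_condExp hmGF' hη (measSet_prod hA0 hB')
      rw [← e1, ← e2, e3, e4]
    have e1 : ∫ z in A ×ˢ B, f z ∂(μ.prod μ') = ∫ ω' in B, φ ω' ∂μ' := by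
      rw [hφdef]; exact fubBox1 μ μ' f A B hfint.integrableOn
    have e2 : ∫ z in A ×ˢ B, g z ∂(μ.prod μ') = ∫ ω' in B, ψ ω' ∂μ' := by
      rw [hψdef]; exact fubBox1 μ μ' g A B hgint.integrableOn
    rw [e1, e2]
    exact integral_congr_ae (ae_restrict_of_ae hφψ)
  have hall : ∀ s, MeasurableSet[ℱ.prod mΩ'] s →
      ∫ x in s, f x ∂(μ.prod μ') = ∫ x in s, g x ∂(μ.prod μ') :=
    auxExt hmFG' (genFrom_prod' ℱ mΩ') (piSys_prod' ℱ mΩ') hfint hgint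
      ((integral_condExp hmFF').trans (integral_condExp hmGF').symm) hrect
  exact ae_eq_condExp_of_forall_setIntegral_eq hmFG' integrable_condExp
    (fun s _ _ => hfint.integrableOn) (fun s hs _ => hall s hs)
    ⟨f, hfm.mono (prodMono le_rfl hℱ'), Filter.EventuallyEq.rfl⟩

private lemma key2 (ℱ : MeasurableSpace Ω) (ℱ' : MeasurableSpace Ω')
    {mΩ : MeasurableSpace Ω} {mΩ' : MeasurableSpace Ω'}
    (hℱ : ℱ ≤ mΩ) (hℱ' : ℱ' ≤ mΩ')
    (μ : Measure Ω) (μ' : Measure Ω') [IsProbabilityMeasure μ] [IsProbabilityMeasure μ']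
    (η : Ω × Ω' → 𝒴) (hη : Integrable η (μ.prod μ')) :
    (μ.prod μ')[η | ℱ.prod ℱ'] =ᵐ[μ.prod μ']
      (μ.prod μ')[((μ.prod μ')[η | ℱ.prod mΩ']) | mΩ.prod ℱ'] := by
  have hmFF' : ℱ.prod ℱ' ≤ mΩ.prod mΩ' := prodMono hℱ hℱ'
  have hmGF' : mΩ.prod ℱ' ≤ mΩ.prod mΩ' := prodMono le_rfl hℱ'
  have hmFG' : ℱ.prod mΩ' ≤ mΩ.prod mΩ' := prodMono hℱ le_rfl
  set f := (μ.prod μ')[η | ℱ.prod ℱ'] with hfdef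
  set g := (μ.prod μ')[η | ℱ.prod mΩ'] with hgdef
  have hfint : Integrable f (μ.prod μ') := integrable_condExp
  have hgint : Integrable g (μ.prod μ') := integrable_condExp
  have hfm : StronglyMeasurable[ℱ.prod ℱ'] f := stronglyMeasurable_condExp
  have hgm : StronglyMeasurable[ℱ.prod mΩ'] g := stronglyMeasurable_condExp
  have hrect : ∀ s ∈ Set.image2 (· ×ˢ ·) {A : Set Ω | MeasurableSet[mΩ] A}
      {B : Set Ω' | MeasurableSet[ℱ'] B},
      ∫ x in s, f x ∂(μ.prod μ') = ∫ x in s, g x ∂(μ.prod μ') := by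
    rintro s ⟨A, hA, B, hB, rfl⟩
    set φ : Ω → 𝒴 := fun ω => ∫ ω', f (ω, ω') ∂(μ'.restrict B) with hφdef
    set ψ : Ω → 𝒴 := fun ω => ∫ ω', g (ω, ω') ∂(μ'.restrict B) with hψdef
    have hB0 : MeasurableSet[mΩ'] B := hℱ' _ hB
    have hfint' : Integrable f (μ.prod (μ'.restrict B)) := by
      have h1 : Integrable f ((μ.restrict Set.univ).prod (μ'.restrict B)) := by
        rw [Measure.prod_restrict]; exact hfint.integrableOn
      rwa [Measure.restrict_univ] at h1
    have hgint' : Integrable g (μ.prod (μ'.restrict B)) := by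
      have h1 : Integrable g ((μ.restrict Set.univ).prod (μ'.restrict B)) := by
        rw [Measure.prod_restrict]; exact hgint.integrableOn
      rwa [Measure.restrict_univ] at h1
    have hφint : Integrable φ μ := by rw [hφdef]; exact hfint'.integral_prod_left
    have hψint : Integrable ψ μ := by rw [hψdef]; exact hgint'.integral_prod_left
    have hφm : StronglyMeasurable[ℱ] φ := by
      rw [hφdef]; exact smIntegralRight ℱ (μ'.restrict B) (hfm.mono (prodMono le_rfl hℱ'))
    have hψm : StronglyMeasurable[ℱ] ψ := by
      rw [hψdef]; exact smIntegralRight ℱ (μ'.restrict B) hgm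
    have hφψ : φ =ᵐ[μ] ψ := by
      refine ae_eq_of_forall_setIntegral_eq_of_sigmaFinite' hℱ
        (fun s _ _ => hφint.integrableOn) (fun s _ _ => hψint.integrableOn) ?_
        ⟨φ, hφm, Filter.EventuallyEq.rfl⟩ ⟨ψ, hψm, Filter.EventuallyEq.rfl⟩
      intro B' hB' _
      have e1 : ∫ z in B' ×ˢ B, f z ∂(μ.prod μ') = ∫ ω in B', φ ω ∂μ := by
        rw [hφdef]; exact fubBox2 μ μ' f B' B hfint.integrableOn
      have e2 : ∫ z in B' ×ˢ B, g z ∂(μ.prod μ') = ∫ ω in B', ψ ω ∂μ := by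
        rw [hψdef]; exact fubBox2 μ μ' g B' B hgint.integrableOn
      have e3 : ∫ z in B' ×ˢ B, f z ∂(μ.prod μ') = ∫ z in B' ×ˢ B, η z ∂(μ.prod μ') :=
        setIntegral_condExp hmFF' hη (measSet_prod hB' hB)
      have e4 : ∫ z in B' ×ˢ B, g z ∂(μ.prod μ') = ∫ z in B' ×ˢ B, η z ∂(μ.prod μ') :=
        setIntegral_condExp hmFG' hη (measSet_prod hB' hB0)
      rw [← e1, ← e2, e3, e4]
    have e1 : ∫ z in A ×ˢ B, f z ∂(μ.prod μ') = ∫ ω in A, φ ω ∂μ := by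
      rw [hφdef]; exact fubBox2 μ μ' f A B hfint.integrableOn
    have e2 : ∫ z in A ×ˢ B, g z ∂(μ.prod μ') = ∫ ω in A, ψ ω ∂μ := by
      rw [hψdef]; exact fubBox2 μ μ' g A B hgint.integrableOn
    rw [e1, e2]
    exact integral_congr_ae (ae_restrict_of_ae hφψ)
  have hall : ∀ s, MeasurableSet[mΩ.prod ℱ'] s →
      ∫ x in s, f x ∂(μ.prod μ') = ∫ x in s, g x ∂(μ.prod μ') :=
    auxExt hmGF' (genFrom_prod' mΩ ℱ') (piSys_prod' mΩ ℱ') hfint hgint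
      ((integral_condExp hmFF').trans (integral_condExp hmFG').symm) hrect
  exact ae_eq_condExp_of_forall_setIntegral_eq hmGF' integrable_condExp
    (fun s _ _ => hfint.integrableOn) (fun s hs _ => hall s hs)
    ⟨f, hfm.mono (prodMono hℱ le_rfl), Filter.EventuallyEq.rfl⟩

end Helpers

/-- Conditional expectation with respect to a product σ-algebra `ℱ ⊗ ℱ'` can be computed
by conditioning successively in each coordinate, in either order. -/
theorem stmt11 {Ω Ω' 𝒴 : Type*} {mΩ : MeasurableSpace Ω} {mΩ' : MeasurableSpace Ω'}
    [NormedAddCommGroup 𝒴] [NormedSpace ℝ 𝒴] [CompleteSpace 𝒴]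
    (μ : Measure Ω) (μ' : Measure Ω') [IsProbabilityMeasure μ] [IsProbabilityMeasure μ']
    (ℱ : MeasurableSpace Ω) (ℱ' : MeasurableSpace Ω') (hℱ : ℱ ≤ mΩ) (hℱ' : ℱ' ≤ mΩ')
    (η : Ω × Ω' → 𝒴)
    (P : @Measure (Ω × Ω') (@Prod.instMeasurableSpace Ω Ω' mΩ mΩ')) (hP : P = @Measure.prod Ω Ω' mΩ mΩ' μ μ')
    (hη : Integrable η P) :
    (P[η | ℱ.prod ℱ'] =ᵐ[P] P[(P[η | mΩ.prod ℱ']) | ℱ.prod mΩ']) ∧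
    (P[η | ℱ.prod ℱ'] =ᵐ[P] P[(P[η | ℱ.prod mΩ']) | mΩ.prod ℱ']) := by
  subst hP
  exact ⟨key1 ℱ ℱ' hℱ hℱ' μ μ' η hη, key2 ℱ ℱ' hℱ hℱ' μ μ' η hη⟩
end

section
/- Let (Ω,𝒢,ℙ) be a probability space and h : ℝ → ℝ a bounded C¹ function with bounded Lipschitz derivative. Define g : L₂(Ω;ℝ) → ℝ by g(ξ) = E[h(ξ)]. Then g is Fréchet differentiable on L₂ with derivative Dg(ξ)[η] = E[h'(ξ)·η], and Dg is Lipschitz: ‖Dg(ξ) − Dg(ξ̄)‖_{L(L₂,ℝ)} ≤ L·‖ξ − ξ̄‖_{L₂}, where L is the Lipschitz constant of h'. -/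
open MeasureTheory

section Aux

variable {Ω : Type*} [MeasurableSpace Ω] {μ : Measure Ω} [IsProbabilityMeasure μ]

private lemma stmt12_memL2 (f : ℝ → ℝ) (C : ℝ) (hf : Continuous f) (hb : ∀ x, |f x| ≤ C)
    (ξ : Lp ℝ 2 μ) : MemLp (fun ω => f (ξ ω)) 2 μ :=
  MemLp.of_bound (hf.comp_aestronglyMeasurable (Lp.aestronglyMeasurable ξ)) C
    (Filter.Eventually.of_forall fun ω => by simpa using hb (ξ ω))

private lemma stmt12_taylor (h h' : ℝ → ℝ) (L : NNReal)
    (hd : ∀ x, HasDerivAt h (h' x) x) (hL : LipschitzWith L h') (a b : ℝ) :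
    |h (a + b) - h a - h' a * b| ≤ L * b ^ 2 := by
  set f : ℝ → ℝ := fun x => h x - h' a * x with hfdef
  have hseg : ∀ x ∈ segment ℝ a (a + b), |x - a| ≤ |b| := by
    rintro x hx
    rcases hx with ⟨s, t, hs, ht, hst, rfl⟩
    have hs1 : s = 1 - t := by linarith
    subst hs1
    have he : (1 - t) • a + t • (a + b) - a = t * b := by
      simp only [smul_eq_mul]; ring
    rw [he, abs_mul]
    calc |t| * |b| ≤ 1 * |b| := by
          apply mul_le_mul_of_nonneg_right _ (abs_nonneg b)
          rw [abs_of_nonneg ht]; linarith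
      _ = |b| := one_mul _
  have key : ‖f (a + b) - f a‖ ≤ (L * |b|) * ‖(a + b) - a‖ := by
    apply Convex.norm_image_sub_le_of_norm_hasDerivWithin_le
      (f' := fun x => h' x - h' a)
      (fun x _ => (((hd x).sub ((hasDerivAt_id x).const_mul (h' a))).congr_deriv
        (by ring)).hasDerivWithinAt)
      (fun x hx => ?_) (convex_segment a (a + b)) (left_mem_segment ℝ a (a + b))
      (right_mem_segment ℝ a (a + b))
    calc ‖h' x - h' a‖ ≤ L * ‖x - a‖ := by
          simpa [dist_eq_norm] using hL.dist_le_mul x a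
      _ ≤ L * |b| := by
          apply mul_le_mul_of_nonneg_left _ (NNReal.coe_nonneg L)
          simpa [Real.norm_eq_abs] using hseg x hx
  have : f (a + b) - f a = h (a + b) - h a - h' a * b := by
    simp only [hfdef]; ring
  rw [this] at key
  calc |h (a + b) - h a - h' a * b| ≤ (L : ℝ) * |b| * |(a + b) - a| := by
        simpa [Real.norm_eq_abs] using key
    _ = (L : ℝ) * b ^ 2 := by
        rw [add_sub_cancel_left, mul_assoc, ← abs_mul, ← sq, abs_of_nonneg (sq_nonneg b)]

end Aux

/-- For `h : ℝ → ℝ` bounded `C¹` with bounded Lipschitz derivative, the function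
`g(ξ) = E[h(ξ)]` is Fréchet differentiable on `L₂` with `Dg(ξ)[η] = E[h'(ξ)η]`, and
`Dg` is Lipschitz with the Lipschitz constant `L` of `h'`. -/
theorem stmt12 {Ω : Type*} [MeasurableSpace Ω] (μ : Measure Ω) [IsProbabilityMeasure μ]
    (h h' : ℝ → ℝ) (C : ℝ) (L : NNReal)
    (hd : ∀ x, HasDerivAt h (h' x) x)
    (hb : ∀ x, |h x| ≤ C) (hb' : ∀ x, |h' x| ≤ C)
    (hL : LipschitzWith L h') :
    ∀ ξ : Lp ℝ 2 μ,
      (∃ D : Lp ℝ 2 μ →L[ℝ] ℝ,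
        HasFDerivAt (fun ζ : Lp ℝ 2 μ => ∫ ω, h (ζ ω) ∂μ) D ξ ∧
        ∀ η : Lp ℝ 2 μ, D η = ∫ ω, h' (ξ ω) * η ω ∂μ) ∧
      ∀ ξ' : Lp ℝ 2 μ,
        ‖fderiv ℝ (fun ζ : Lp ℝ 2 μ => ∫ ω, h (ζ ω) ∂μ) ξ -
          fderiv ℝ (fun ζ : Lp ℝ 2 μ => ∫ ω, h (ζ ω) ∂μ) ξ'‖ ≤ (L : ℝ) * ‖ξ - ξ'‖ := by
  have hcont : Continuous h := by
    rw [continuous_iff_continuousAt]; exact fun x => (hd x).continuousAt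
  -- Φ ξ is h' ∘ ξ as an element of L2
  set Φ : Lp ℝ 2 μ → Lp ℝ 2 μ :=
    fun ξ => (stmt12_memL2 h' C hL.continuous hb' ξ).toLp _ with hΦdef
  have hΦae : ∀ ξ : Lp ℝ 2 μ, (Φ ξ : Ω → ℝ) =ᵐ[μ] fun ω => h' (ξ ω) :=
    fun ξ => (stmt12_memL2 h' C hL.continuous hb' ξ).coeFn_toLp
  -- D ξ η = ⟪Φ ξ, η⟫ = ∫ h'(ξ) η
  have hDapply : ∀ ξ η : Lp ℝ 2 μ, innerSL ℝ (Φ ξ) η = ∫ ω, h' (ξ ω) * η ω ∂μ := by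
    intro ξ η
    rw [innerSL_apply_apply, L2.inner_def]
    refine integral_congr_ae ?_
    filter_upwards [hΦae ξ] with ω hω
    simp [hω, RCLike.inner_apply, mul_comm]
  have hint_mul : ∀ ξ η : Lp ℝ 2 μ, Integrable (fun ω => h' (ξ ω) * η ω) μ := by
    intro ξ η
    have := L2.integrable_inner (𝕜 := ℝ) (Φ ξ) η
    refine this.congr ?_
    filter_upwards [hΦae ξ] with ω hω
    simp [hω, RCLike.inner_apply, mul_comm]
  have hint_h : ∀ f : Ω → ℝ, AEStronglyMeasurable f μ → Integrable (fun ω => h (f ω)) μ := by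
    intro f hf
    refine memLp_one_iff_integrable.mp ?_
    exact MemLp.of_bound (hcont.comp_aestronglyMeasurable hf) C
      (Filter.Eventually.of_forall fun ω => by simpa using hb (f ω))
  -- main differentiability claim
  have hmain : ∀ ξ : Lp ℝ 2 μ,
      HasFDerivAt (fun ζ : Lp ℝ 2 μ => ∫ ω, h (ζ ω) ∂μ) (innerSL ℝ (Φ ξ)) ξ := by
    intro ξ
    rw [hasFDerivAt_iff_isLittleO_nhds_zero]
    have key : ∀ η : Lp ℝ 2 μ,
        |(∫ ω, h ((ξ + η) ω) ∂μ) - (∫ ω, h (ξ ω) ∂μ) - innerSL ℝ (Φ ξ) η|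
          ≤ (L : ℝ) * ‖η‖ ^ 2 := by
      intro η
      have hsq : ∫ ω, η ω * η ω ∂μ = ‖η‖ ^ 2 := by
        have h1 := real_inner_self_eq_norm_sq η
        rw [L2.inner_def] at h1
        simpa [RCLike.inner_apply, sq] using h1
      have hI1 : Integrable (fun ω => h (ξ ω + η ω)) μ :=
        hint_h _ ((Lp.aestronglyMeasurable ξ).add (Lp.aestronglyMeasurable η))
      have hI2 : Integrable (fun ω => h (ξ ω)) μ := hint_h _ (Lp.aestronglyMeasurable ξ)
      have hI3 := hint_mul ξ η
      have hIsq : Integrable (fun ω => η ω * η ω) μ := by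
        have := L2.integrable_inner (𝕜 := ℝ) η η
        exact this.congr (Filter.Eventually.of_forall fun ω => by simp [RCLike.inner_apply, sq])
      have e1 : (∫ ω, h ((ξ + η) ω) ∂μ) = ∫ ω, h (ξ ω + η ω) ∂μ := by
        refine integral_congr_ae ?_
        filter_upwards [Lp.coeFn_add ξ η] with ω hω
        rw [hω]; rfl
      have e2 : ∫ ω, (h (ξ ω + η ω) - h (ξ ω) - h' (ξ ω) * η ω) ∂μ
          = (∫ ω, h (ξ ω + η ω) ∂μ) - (∫ ω, h (ξ ω) ∂μ) - ∫ ω, h' (ξ ω) * η ω ∂μ := by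
        have hI12 : Integrable (fun ω => h (ξ ω + η ω) - h (ξ ω)) μ := hI1.sub hI2
        rw [integral_sub hI12 hI3, integral_sub hI1 hI2]
      rw [e1, hDapply ξ η, ← e2]
      calc |∫ ω, (h (ξ ω + η ω) - h (ξ ω) - h' (ξ ω) * η ω) ∂μ|
          ≤ ∫ ω, |h (ξ ω + η ω) - h (ξ ω) - h' (ξ ω) * η ω| ∂μ := by
            simpa [Real.norm_eq_abs] using
              norm_integral_le_integral_norm (fun ω => h (ξ ω + η ω) - h (ξ ω) - h' (ξ ω) * η ω)
        _ ≤ ∫ ω, (L : ℝ) * (η ω * η ω) ∂μ := by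
            refine integral_mono_of_nonneg (Filter.Eventually.of_forall fun ω => abs_nonneg _)
              (hIsq.const_mul _) (Filter.Eventually.of_forall fun ω => ?_)
            have := stmt12_taylor h h' L hd hL (ξ ω) (η ω)
            simpa [sq] using this
        _ = (L : ℝ) * ‖η‖ ^ 2 := by rw [integral_const_mul, hsq]
    rw [Asymptotics.isLittleO_iff]
    intro c hc
    have hball : ∀ᶠ η : Lp ℝ 2 μ in nhds 0, ‖η‖ < c / ((L : ℝ) + 1) := by
      have := Metric.ball_mem_nhds (0 : Lp ℝ 2 μ) (by positivity : (0:ℝ) < c / ((L : ℝ) + 1))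
      filter_upwards [this] with η hη
      simpa [dist_zero_right] using hη
    filter_upwards [hball] with η hη
    calc ‖(∫ ω, h ((ξ + η) ω) ∂μ) - (∫ ω, h (ξ ω) ∂μ) - innerSL ℝ (Φ ξ) η‖
        ≤ (L : ℝ) * ‖η‖ ^ 2 := by simpa [Real.norm_eq_abs] using key η
      _ = ((L : ℝ) * ‖η‖) * ‖η‖ := by ring
      _ ≤ c * ‖η‖ := by
          apply mul_le_mul_of_nonneg_right _ (norm_nonneg η)
          calc (L : ℝ) * ‖η‖ ≤ ((L : ℝ) + 1) * (c / ((L : ℝ) + 1)) := by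
                apply mul_le_mul (by linarith [NNReal.coe_nonneg L]) hη.le (norm_nonneg η)
                positivity
            _ = c := by field_simp
  -- Lipschitz estimate on Φ
  have hΦlip : ∀ ξ ξ' : Lp ℝ 2 μ, ‖Φ ξ - Φ ξ'‖ ≤ (L : ℝ) * ‖ξ - ξ'‖ := by
    intro ξ ξ'
    apply Lp.norm_le_mul_norm_of_ae_le_mul
    filter_upwards [Lp.coeFn_sub (Φ ξ) (Φ ξ'), Lp.coeFn_sub ξ ξ', hΦae ξ, hΦae ξ'] with ω h1 h2 h3 h4
    rw [h1, h2]
    simp only [Pi.sub_apply, h3, h4, Real.norm_eq_abs]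
    simpa [dist_eq_norm, Real.norm_eq_abs] using hL.dist_le_mul (ξ ω) (ξ' ω)
  intro ξ
  refine ⟨⟨innerSL ℝ (Φ ξ), hmain ξ, hDapply ξ⟩, fun ξ' => ?_⟩
  rw [(hmain ξ).fderiv, (hmain ξ').fderiv]
  calc ‖innerSL ℝ (Φ ξ) - innerSL ℝ (Φ ξ')‖ = ‖innerSL ℝ (Φ ξ - Φ ξ')‖ := by rw [map_sub]
    _ = ‖Φ ξ - Φ ξ'‖ := innerSL_apply_norm (𝕜 := ℝ) _
    _ ≤ (L : ℝ) * ‖ξ - ξ'‖ := hΦlip ξ ξ'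
end

section
/- Let (Ω,𝒢,ℙ) be an atomless Polish probability space, W a finite-dimensional real vector space, q ∈ [0,∞), p ≥ max(q,1), and 𝒴 a Banach space. Suppose f : 𝒫_q(W) → 𝒴 is such that the lift g : L_q(Ω;W) → 𝒴, g(ξ) = f(Law(ξ)), is continuously Fréchet differentiable along L_p(Ω;W). Then for all (ξ,η) and (ξ̄,η̄) in L_q × L_p with Law(ξ,η) = Law(ξ̄,η̄), one has Dg(ξ)[η] = Dg(ξ̄)[η̄]. -/
open MeasureTheory ENNReal

/-- Law-invariance of the Fréchet derivative along `L_p` of a Lions lift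
`g(ξ) = f(Law(ξ))`: if `Law(ξ,η) = Law(ξ',η')` then `Dg(ξ)[η] = Dg(ξ')[η']`. -/
theorem stmt17 {Ω W 𝒴 : Type*} [MeasurableSpace Ω] [TopologicalSpace Ω] [PolishSpace Ω]
    [BorelSpace Ω]
    [NormedAddCommGroup W] [NormedSpace ℝ W] [FiniteDimensional ℝ W]
    [MeasurableSpace W] [BorelSpace W]
    [NormedAddCommGroup 𝒴] [NormedSpace ℝ 𝒴]
    (ℙ : Measure Ω) [IsProbabilityMeasure ℙ] [NullSingletonClass ℙ]
    (p q : ℝ≥0∞) [Fact (1 ≤ p)] (hq : q < ⊤) (hp1 : 1 ≤ p) (hqp : q ≤ p)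
    (f : Measure W → 𝒴) (g : (Ω → W) → 𝒴)
    (hg : ∀ ξ : Ω → W, g ξ = f (Measure.map ξ ℙ))
    (Dg : (Ω → W) → (Lp W p ℙ →L[ℝ] 𝒴))
    (hdiff : ∀ ξ : Ω → W,
      HasFDerivAt (fun ζ : Lp W p ℙ => g (fun ω => ξ ω + ζ ω)) (Dg ξ) 0)
    (hcont : ∀ ξ : Ω → W, Continuous fun ζ : Lp W p ℙ => Dg (fun ω => ξ ω + ζ ω)) :
    ∀ (ξ ξ' : Ω → W) (η η' : Lp W p ℙ),
      AEMeasurable ξ ℙ → AEMeasurable ξ' ℙ → MemLp ξ q ℙ → MemLp ξ' q ℙ →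
      Measure.map (fun ω => (ξ ω, η ω)) ℙ = Measure.map (fun ω => (ξ' ω, η' ω)) ℙ →
      Dg ξ η = Dg ξ' η' := by
  intro ξ ξ' η η' hξ hξ' _ _ hlaw
  have hηm : AEMeasurable (⇑η) ℙ := (Lp.aestronglyMeasurable η).aemeasurable
  have hη'm : AEMeasurable (⇑η') ℙ := (Lp.aestronglyMeasurable η').aemeasurable
  have key : ∀ t : ℝ, g (fun ω => ξ ω + (t • η : Lp W p ℙ) ω)
      = g (fun ω => ξ' ω + (t • η' : Lp W p ℙ) ω) := by
    intro t
    rw [hg, hg]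
    congr 1
    have hφ : Measurable (fun x : W × W => x.1 + t • x.2) :=
      measurable_fst.add (measurable_snd.const_smul t)
    have h1 : (fun ω => ξ ω + (t • η : Lp W p ℙ) ω) =ᵐ[ℙ]
        (fun x : W × W => x.1 + t • x.2) ∘ (fun ω => (ξ ω, η ω)) := by
      filter_upwards [Lp.coeFn_smul t η] with ω hω
      simp [Function.comp, hω]
    have h2 : (fun ω => ξ' ω + (t • η' : Lp W p ℙ) ω) =ᵐ[ℙ]
        (fun x : W × W => x.1 + t • x.2) ∘ (fun ω => (ξ' ω, η' ω)) := by
      filter_upwards [Lp.coeFn_smul t η'] with ω hω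
      simp [Function.comp, hω]
    rw [Measure.map_congr h1, Measure.map_congr h2,
      ← AEMeasurable.map_map_of_aemeasurable hφ.aemeasurable (hξ.prodMk hηm),
      ← AEMeasurable.map_map_of_aemeasurable hφ.aemeasurable (hξ'.prodMk hη'm), hlaw]
  have hsmul : ∀ η₀ : Lp W p ℙ, HasDerivAt (fun t : ℝ => t • η₀) η₀ 0 := by
    intro η₀
    simpa using (hasDerivAt_id (0 : ℝ)).smul_const η₀
  have hF : HasDerivAt (fun t : ℝ => g (fun ω => ξ ω + (t • η : Lp W p ℙ) ω)) (Dg ξ η) 0 := by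
    have h0 : HasFDerivAt (fun ζ : Lp W p ℙ => g (fun ω => ξ ω + ζ ω)) (Dg ξ)
        ((0 : ℝ) • η) := by
      rw [zero_smul]; exact hdiff ξ
    exact h0.comp_hasDerivAt 0 (hsmul η)
  have hF' : HasDerivAt (fun t : ℝ => g (fun ω => ξ' ω + (t • η' : Lp W p ℙ) ω)) (Dg ξ' η') 0 := by
    have h0 : HasFDerivAt (fun ζ : Lp W p ℙ => g (fun ω => ξ' ω + ζ ω)) (Dg ξ')
        ((0 : ℝ) • η') := by
      rw [zero_smul]; exact hdiff ξ'
    exact h0.comp_hasDerivAt 0 (hsmul η')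
  have hF2 : HasDerivAt (fun t : ℝ => g (fun ω => ξ' ω + (t • η' : Lp W p ℙ) ω)) (Dg ξ η) 0 := by
    simpa [funext key] using hF
  exact hF2.unique hF'
end
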